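/- In the 13-dimensional Lie algebra 𝔤 = span{S₀,S₁,S₂,R,Y₀,Z₀,…,Z₅} with the brackets of the maximal symmetry algebra of y' = (z''')², the span of {S₀,S₁,S₂} is a subalgebra isomorphic to sl₂, and span{R,Y₀,Z₀,…,Z₅} is a solvable ideal; thus 𝔤 = sl₂ ⋉ 𝔪⁸ is its Levi decomposition. -/

import Mathlib

open scoped BigOperators

/-- Structure constants of the maximal symmetry algebra of `y' = (z''')²` in the
basis `S₀,S₁,S₂,R,Y₀,Z₀,…,Z₅` (indices `0,1,2,3,4,5+l`); see the bracket table: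
`[S₀,S₁]=S₀`, `[S₀,S₂]=2S₁`, `[S₁,S₂]=S₂`, `[S₀,Zᵢ]=Z_{i−1}`, `[S₁,Zᵢ]=(i−5/2)Zᵢ`,
`[S₂,Zᵢ]=(i+1)(i−5)Z_{i+1}`, `[Z₀,Z₅]=2Y₀`, `[Z₁,Z₄]=−2Y₀`, `[Z₂,Z₃]=2Y₀`,
`[Y₀,R]=Y₀`, `[Zᵢ,R]=(1/2)Zᵢ`, with `Z₋₁ = Z₆ = 0`. -/
noncomputable def tanakaC (i j k : ℕ) : ℝ :=
  if i = 0 ∧ j = 1 ∧ k = 0 then 1 else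
  if i = 1 ∧ j = 0 ∧ k = 0 then -1 else
  if i = 0 ∧ j = 2 ∧ k = 1 then 2 else
  if i = 2 ∧ j = 0 ∧ k = 1 then -2 else
  if i = 1 ∧ j = 2 ∧ k = 2 then 1 else
  if i = 2 ∧ j = 1 ∧ k = 2 then -1 else
  if i = 0 ∧ 6 ≤ j ∧ j ≤ 10 ∧ k + 1 = j then 1 else
  if j = 0 ∧ 6 ≤ i ∧ i ≤ 10 ∧ k + 1 = i then -1 else
  if i = 1 ∧ 5 ≤ j ∧ j ≤ 10 ∧ k = j then ((j : ℝ) - 5) - 5/2 else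
  if j = 1 ∧ 5 ≤ i ∧ i ≤ 10 ∧ k = i then -(((i : ℝ) - 5) - 5/2) else
  if i = 2 ∧ 5 ≤ j ∧ j ≤ 9 ∧ k = j + 1 then (((j : ℝ) - 5) + 1) * (((j : ℝ) - 5) - 5) else
  if j = 2 ∧ 5 ≤ i ∧ i ≤ 9 ∧ k = i + 1 then -((((i : ℝ) - 5) + 1) * (((i : ℝ) - 5) - 5)) else
  if i = 5 ∧ j = 10 ∧ k = 4 then 2 else
  if i = 10 ∧ j = 5 ∧ k = 4 then -2 else
  if i = 6 ∧ j = 9 ∧ k = 4 then -2 else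
  if i = 9 ∧ j = 6 ∧ k = 4 then 2 else
  if i = 7 ∧ j = 8 ∧ k = 4 then 2 else
  if i = 8 ∧ j = 7 ∧ k = 4 then -2 else
  if i = 4 ∧ j = 3 ∧ k = 4 then 1 else
  if i = 3 ∧ j = 4 ∧ k = 4 then -1 else
  if 5 ≤ i ∧ i ≤ 10 ∧ j = 3 ∧ k = i then 1/2 else
  if 5 ≤ j ∧ j ≤ 10 ∧ i = 3 ∧ k = j then -(1/2) else 0

/-- The bilinear bracket determined by the structure constants `tanakaC`. -/
noncomputable def tanakaBracket (x y : Fin 11 → ℝ) : Fin 11 → ℝ :=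
  fun k => ∑ i, ∑ j, x i * y j * tanakaC i.val j.val k.val

/-- The span of the basis vectors `S₀,S₁,S₂` (indices `< 3`). -/
noncomputable def sl2Span : Submodule ℝ (Fin 11 → ℝ) :=
  Submodule.span ℝ {v | ∃ i : Fin 11, i.val < 3 ∧ v = Pi.single i 1}

/-- The span `𝔪⁸` of the basis vectors `R,Y₀,Z₀,…,Z₅` (indices `≥ 3`). -/
noncomputable def radSpan : Submodule ℝ (Fin 11 → ℝ) :=
  Submodule.span ℝ {v | ∃ i : Fin 11, 3 ≤ i.val ∧ v = Pi.single i 1}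

/-- The derived series of the subspace `M` under the bracket `tanakaBracket`. -/
noncomputable def bracketDerivedSeries (M : Submodule ℝ (Fin 11 → ℝ)) : ℕ → Submodule ℝ (Fin 11 → ℝ)
  | 0 => M
  | n + 1 => Submodule.span ℝ
      {z | ∃ x ∈ bracketDerivedSeries M n, ∃ y ∈ bracketDerivedSeries M n, z = tanakaBracket x y}

lemma mem_sl2_iff (x : Fin 11 → ℝ) :
    x ∈ sl2Span ↔ ∀ k : Fin 11, 3 ≤ k.val → x k = 0 := by
  constructor
  · intro hx
    induction hx using Submodule.span_induction with
    | mem v hv => rintro k hk; obtain ⟨i, hi, rfl⟩ := hv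
                  exact Pi.single_eq_of_ne (by omega : k ≠ i) 1
    | zero => intro k _; rfl
    | add a b _ _ ha hb => intro k hk; simp [ha k hk, hb k hk]
    | smul c a _ ha => intro k hk; simp [ha k hk]
  · intro h
    have hx : x = x 0 • (Pi.single (0 : Fin 11) 1 : Fin 11 → ℝ)
        + x 1 • (Pi.single (1 : Fin 11) 1 : Fin 11 → ℝ)
        + x 2 • (Pi.single (2 : Fin 11) 1 : Fin 11 → ℝ) := by
      funext k
      fin_cases k <;> simp (config := { decide := true }) [Pi.single_apply] <;>
        exact h _ (by decide)
    rw [hx]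
    refine Submodule.add_mem _ (Submodule.add_mem _ ?_ ?_) ?_ <;>
      exact Submodule.smul_mem _ _ (Submodule.subset_span ⟨_, by decide, rfl⟩)

lemma mem_rad_iff (x : Fin 11 → ℝ) :
    x ∈ radSpan ↔ x 0 = 0 ∧ x 1 = 0 ∧ x 2 = 0 := by
  constructor
  · intro hx
    induction hx using Submodule.span_induction with
    | mem v hv => obtain ⟨i, hi, rfl⟩ := hv
                  refine ⟨?_, ?_, ?_⟩ <;> exact Pi.single_eq_of_ne (by omega) 1
    | zero => exact ⟨rfl, rfl, rfl⟩
    | add a b _ _ ha hb => obtain ⟨h1,h2,h3⟩ := ha; obtain ⟨g1,g2,g3⟩ := hb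
                           simp [h1,h2,h3,g1,g2,g3]
    | smul c a _ ha => obtain ⟨h1,h2,h3⟩ := ha; simp [h1,h2,h3]
  · rintro ⟨h0, h1, h2⟩
    have hx : x = x 3 • (Pi.single (3 : Fin 11) 1 : Fin 11 → ℝ)
        + x 4 • (Pi.single (4 : Fin 11) 1 : Fin 11 → ℝ)
        + x 5 • (Pi.single (5 : Fin 11) 1 : Fin 11 → ℝ)
        + x 6 • (Pi.single (6 : Fin 11) 1 : Fin 11 → ℝ)
        + x 7 • (Pi.single (7 : Fin 11) 1 : Fin 11 → ℝ)
        + x 8 • (Pi.single (8 : Fin 11) 1 : Fin 11 → ℝ)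
        + x 9 • (Pi.single (9 : Fin 11) 1 : Fin 11 → ℝ)
        + x 10 • (Pi.single (10 : Fin 11) 1 : Fin 11 → ℝ) := by
      funext k
      fin_cases k <;> simp (config := { decide := true }) [Pi.single_apply] <;> assumption
    rw [hx]
    refine Submodule.add_mem _ (Submodule.add_mem _ (Submodule.add_mem _ (Submodule.add_mem _
      (Submodule.add_mem _ (Submodule.add_mem _ (Submodule.add_mem _ ?_ ?_) ?_) ?_) ?_) ?_) ?_) ?_ <;>
      exact Submodule.smul_mem _ _ (Submodule.subset_span ⟨_, by decide, rfl⟩)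

/-- Coordinates `0,1,2,3` vanish. -/
def tanakaM1 : Submodule ℝ (Fin 11 → ℝ) where
  carrier := {x | x 0 = 0 ∧ x 1 = 0 ∧ x 2 = 0 ∧ x 3 = 0}
  add_mem' := by rintro a b ⟨a0,a1,a2,a3⟩ ⟨b0,b1,b2,b3⟩; simp_all
  zero_mem' := by simp
  smul_mem' := by rintro c a ⟨a0,a1,a2,a3⟩; simp_all

/-- Only coordinate `4` may be nonzero. -/
def tanakaMY : Submodule ℝ (Fin 11 → ℝ) where
  carrier := {x | ∀ k : Fin 11, k ≠ 4 → x k = 0}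
  add_mem' := by intro a b ha hb k hk; simp [ha k hk, hb k hk]
  zero_mem' := by intro k _; rfl
  smul_mem' := by intro c a ha k hk; simp [ha k hk]

lemma mem_tanakaM1 (x : Fin 11 → ℝ) :
    x ∈ tanakaM1 ↔ x 0 = 0 ∧ x 1 = 0 ∧ x 2 = 0 ∧ x 3 = 0 := Iff.rfl

lemma mem_tanakaMY (x : Fin 11 → ℝ) :
    x ∈ tanakaMY ↔ ∀ k : Fin 11, k ≠ 4 → x k = 0 := Iff.rfl

lemma sum_univ_eleven {M : Type*} [AddCommMonoid M] (f : Fin 11 → M) :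
    ∑ i, f i = f 0 + f 1 + f 2 + f 3 + f 4 + f 5 + f 6 + f 7 + f 8 + f 9 + f 10 := by
  rw [Fin.sum_univ_castSucc, Fin.sum_univ_castSucc, Fin.sum_univ_castSucc, Fin.sum_univ_eight]
  rfl

/-- The linear map realizing `span{S₀,S₁,S₂}` as traceless 2×2 matrices. -/
noncomputable def sl2Map : (Fin 11 → ℝ) →ₗ[ℝ] Matrix (Fin 2) (Fin 2) ℝ where
  toFun x := Matrix.of ![![-(x 1) / 2, x 0], ![-(x 2), x 1 / 2]]
  map_add' x y := by
    funext i j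
    fin_cases i <;> fin_cases j <;> simp [Matrix.add_apply] <;> ring
  map_smul' c x := by
    funext i j
    fin_cases i <;> fin_cases j <;> simp [Matrix.smul_apply] <;> ring

lemma sl2Map_apply (x : Fin 11 → ℝ) :
    sl2Map x = Matrix.of ![![-(x 1) / 2, x 0], ![-(x 2), x 1 / 2]] := rfl

set_option maxHeartbeats 4000000 in
theorem tanaka_levi_decomposition' :
    (∀ x ∈ sl2Span, ∀ y ∈ sl2Span, tanakaBracket x y ∈ sl2Span) ∧
    (∃ f : (Fin 11 → ℝ) →ₗ[ℝ] Matrix (Fin 2) (Fin 2) ℝ,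
      Set.InjOn f (sl2Span : Set (Fin 11 → ℝ)) ∧
      f '' (sl2Span : Set (Fin 11 → ℝ)) = {A | A.trace = 0} ∧
      ∀ x ∈ sl2Span, ∀ y ∈ sl2Span,
        f (tanakaBracket x y) = f x * f y - f y * f x) ∧
    (∀ x : Fin 11 → ℝ, ∀ y ∈ radSpan, tanakaBracket x y ∈ radSpan) ∧
    (∃ N : ℕ, bracketDerivedSeries radSpan N = ⊥) ∧
    sl2Span ⊔ radSpan = ⊤ ∧ sl2Span ⊓ radSpan = ⊥ := by
  refine ⟨?_, ?_, ?_, ?_, ?_, ?_⟩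
  · -- closure of sl2Span
    intro x hx y hy
    rw [mem_sl2_iff] at hx hy
    have hx3 := hx 3 (by decide); have hx4 := hx 4 (by decide); have hx5 := hx 5 (by decide)
    have hx6 := hx 6 (by decide); have hx7 := hx 7 (by decide); have hx8 := hx 8 (by decide)
    have hx9 := hx 9 (by decide); have hx10 := hx 10 (by decide)
    have hy3 := hy 3 (by decide); have hy4 := hy 4 (by decide); have hy5 := hy 5 (by decide)
    have hy6 := hy 6 (by decide); have hy7 := hy 7 (by decide); have hy8 := hy 8 (by decide)
    have hy9 := hy 9 (by decide); have hy10 := hy 10 (by decide)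
    rw [mem_sl2_iff]
    intro k hk
    fin_cases k <;>
      first
      | exact absurd hk (by decide)
      | simp (config := { decide := true }) [tanakaBracket, tanakaC, sum_univ_eleven,
          hx3, hx4, hx5, hx6, hx7, hx8, hx9, hx10, hy3, hy4, hy5, hy6, hy7, hy8, hy9, hy10]
  · -- sl2 isomorphism
    refine ⟨sl2Map, ?_, ?_, ?_⟩
    · intro a ha b hb hab
      rw [SetLike.mem_coe, mem_sl2_iff] at ha hb
      have e00 := congr_fun (congr_fun hab 0) 0
      have e01 := congr_fun (congr_fun hab 0) 1
      have e10 := congr_fun (congr_fun hab 1) 0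
      simp [sl2Map_apply] at e00 e01 e10
      funext k
      fin_cases k
      · exact e01
      · show a 1 = b 1; linarith
      · show a 2 = b 2; linarith
      all_goals rw [ha _ (by decide), hb _ (by decide)]
    · ext A
      simp only [Set.mem_image, SetLike.mem_coe, Set.mem_setOf_eq]
      constructor
      · rintro ⟨x, hx, rfl⟩
        simp [sl2Map_apply, Matrix.trace, Fin.sum_univ_two, Matrix.diag]
        ring
      · intro hA
        have tr : A 0 0 + A 1 1 = 0 := by
          simpa [Matrix.trace, Fin.sum_univ_two, Matrix.diag] using hA
        refine ⟨fun k => if k = 0 then A 0 1 else if k = 1 then -2 * A 0 0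
                  else if k = 2 then -(A 1 0) else 0, ?_, ?_⟩
        · rw [mem_sl2_iff]
          intro k hk
          rw [if_neg (by omega), if_neg (by omega), if_neg (by omega)]
        · funext i j
          fin_cases i <;> fin_cases j <;>
            simp (config := { decide := true }) [sl2Map_apply] <;> linarith
    · intro x hx y hy
      rw [mem_sl2_iff] at hx hy
      have hx3 := hx 3 (by decide); have hx4 := hx 4 (by decide); have hx5 := hx 5 (by decide)
      have hx6 := hx 6 (by decide); have hx7 := hx 7 (by decide); have hx8 := hx 8 (by decide)
      have hx9 := hx 9 (by decide); have hx10 := hx 10 (by decide)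
      have hy3 := hy 3 (by decide); have hy4 := hy 4 (by decide); have hy5 := hy 5 (by decide)
      have hy6 := hy 6 (by decide); have hy7 := hy 7 (by decide); have hy8 := hy 8 (by decide)
      have hy9 := hy 9 (by decide); have hy10 := hy 10 (by decide)
      funext i j
      fin_cases i <;> fin_cases j <;>
        · simp (config := { decide := true }) [sl2Map_apply, tanakaBracket, tanakaC, sum_univ_eleven,
            Matrix.mul_apply, Matrix.sub_apply, Fin.sum_univ_two,
            hx3, hx4, hx5, hx6, hx7, hx8, hx9, hx10, hy3, hy4, hy5, hy6, hy7, hy8, hy9, hy10]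
          ring
  · -- radSpan is an ideal
    intro x y hy
    rw [mem_rad_iff] at hy
    obtain ⟨hy0, hy1, hy2⟩ := hy
    rw [mem_rad_iff]
    refine ⟨?_, ?_, ?_⟩ <;>
      simp (config := { decide := true }) [tanakaBracket, tanakaC, sum_univ_eleven, hy0, hy1, hy2]
  · -- solvability
    have h1 : bracketDerivedSeries radSpan 1 ≤ tanakaM1 := by
      rw [bracketDerivedSeries]
      apply Submodule.span_le.2
      rintro z ⟨a, ha, b, hb, rfl⟩
      rw [show bracketDerivedSeries radSpan 0 = radSpan from rfl, mem_rad_iff] at ha hb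
      obtain ⟨a0, a1, a2⟩ := ha; obtain ⟨b0, b1, b2⟩ := hb
      rw [SetLike.mem_coe, mem_tanakaM1]
      refine ⟨?_, ?_, ?_, ?_⟩ <;>
        simp (config := { decide := true }) [tanakaBracket, tanakaC, sum_univ_eleven,
          a0, a1, a2, b0, b1, b2]
    have h2 : bracketDerivedSeries radSpan 2 ≤ tanakaMY := by
      rw [bracketDerivedSeries]
      apply Submodule.span_le.2
      rintro z ⟨a, ha, b, hb, rfl⟩
      obtain ⟨a0, a1, a2, a3⟩ := h1 ha
      obtain ⟨b0, b1, b2, b3⟩ := h1 hb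
      rw [SetLike.mem_coe, mem_tanakaMY]
      intro k hk
      fin_cases k <;>
        first
        | exact absurd (by decide) hk
        | simp (config := { decide := true }) [tanakaBracket, tanakaC, sum_univ_eleven,
            a0, a1, a2, a3, b0, b1, b2, b3]
    have h3 : bracketDerivedSeries radSpan 3 ≤ ⊥ := by
      rw [bracketDerivedSeries]
      apply Submodule.span_le.2
      rintro z ⟨a, ha, b, hb, rfl⟩
      have ha' := h2 ha
      have hb' := h2 hb
      rw [mem_tanakaMY] at ha' hb'
      have a0 := ha' 0 (by decide); have a1 := ha' 1 (by decide); have a2 := ha' 2 (by decide)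
      have a3 := ha' 3 (by decide); have a5 := ha' 5 (by decide); have a6 := ha' 6 (by decide)
      have a7 := ha' 7 (by decide); have a8 := ha' 8 (by decide); have a9 := ha' 9 (by decide)
      have a10 := ha' 10 (by decide)
      have b0 := hb' 0 (by decide); have b1 := hb' 1 (by decide); have b2 := hb' 2 (by decide)
      have b3 := hb' 3 (by decide); have b5 := hb' 5 (by decide); have b6 := hb' 6 (by decide)
      have b7 := hb' 7 (by decide); have b8 := hb' 8 (by decide); have b9 := hb' 9 (by decide)
      have b10 := hb' 10 (by decide)
      rw [SetLike.mem_coe, Submodule.mem_bot]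
      funext k
      fin_cases k <;>
        simp (config := { decide := true }) [tanakaBracket, tanakaC, sum_univ_eleven,
          a0, a1, a2, a3, a5, a6, a7, a8, a9, a10, b0, b1, b2, b3, b5, b6, b7, b8, b9, b10]
    exact ⟨3, le_bot_iff.1 h3⟩
  · -- sup = ⊤
    rw [eq_top_iff]
    intro x _
    rw [Submodule.mem_sup]
    refine ⟨fun k => if k.val < 3 then x k else 0, ?_,
            fun k => if k.val < 3 then 0 else x k, ?_, ?_⟩
    · rw [mem_sl2_iff]
      intro k hk
      exact if_neg (by omega)
    · rw [mem_rad_iff]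
      refine ⟨?_, ?_, ?_⟩ <;> exact if_pos (by decide)
    · funext k
      by_cases h : k.val < 3 <;> simp [h]
  · -- inf = ⊥
    rw [eq_bot_iff]
    intro x hx
    obtain ⟨hs, hr⟩ := Submodule.mem_inf.1 hx
    rw [mem_sl2_iff] at hs
    obtain ⟨h0, h1, h2⟩ := (mem_rad_iff x).1 hr
    rw [Submodule.mem_bot]
    funext k
    fin_cases k <;> first
      | assumption
      | exact hs _ (by decide)

/-- In the symmetry algebra of `y' = (z''')²`, the span of `S₀,S₁,S₂` is a
subalgebra isomorphic to `sl₂` (realized as traceless 2×2 real matrices), and the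
span `𝔪⁸` of `R,Y₀,Z₀,…,Z₅` is a solvable ideal; thus `𝔤 = sl₂ ⋉ 𝔪⁸` is the
Levi decomposition. -/
theorem tanaka_levi_decomposition :
    (∀ x ∈ sl2Span, ∀ y ∈ sl2Span, tanakaBracket x y ∈ sl2Span) ∧
    (∃ f : (Fin 11 → ℝ) →ₗ[ℝ] Matrix (Fin 2) (Fin 2) ℝ,
      Set.InjOn f (sl2Span : Set (Fin 11 → ℝ)) ∧
      f '' (sl2Span : Set (Fin 11 → ℝ)) = {A | A.trace = 0} ∧
      ∀ x ∈ sl2Span, ∀ y ∈ sl2Span,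
        f (tanakaBracket x y) = f x * f y - f y * f x) ∧
    (∀ x : Fin 11 → ℝ, ∀ y ∈ radSpan, tanakaBracket x y ∈ radSpan) ∧
    (∃ N : ℕ, bracketDerivedSeries radSpan N = ⊥) ∧
    sl2Span ⊔ radSpan = ⊤ ∧ sl2Span ⊓ radSpan = ⊥ := by
  exact tanaka_levi_decomposition'
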